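/- Let (A₁, E₁) and (A₂, E₂) be smooth solutions of the Maxwell evolution system with (possibly different) smooth gauge functions φ₁, φ₂, both satisfying the Gauss constraint div_x E_i = 0 for all t, and suppose there exists R > 0 such that A_i(t, x) = 0 and E_i(t, x) = 0 whenever |x| ≥ R, for i = 1, 2 and all t. Then the pre-symplectic pairing of the two solutions, t ↦ ∫_{ℝ³} (A₁(t, x) · E₂(t, x) − A₂(t, x) · E₁(t, x)) dx, is constant in t. (Concretely, this expresses that each evolution vector field Γ_φ preserves the pre-symplectic form: 𝓛_{Γ_φ} ω = 0.) -/

import Mathlib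

open MeasureTheory

/-- Partial derivative `∂_j f` of a scalar function on `ℝ³`. -/
noncomputable def pd (f : (Fin 3 → ℝ) → ℝ) (j : Fin 3) (x : Fin 3 → ℝ) : ℝ :=
  fderiv ℝ f x (Pi.single j 1)

/-- Divergence `div F = Σ_j ∂_j F_j` of a vector field on `ℝ³`. -/
noncomputable def div3 (F : (Fin 3 → ℝ) → (Fin 3 → ℝ)) (x : Fin 3 → ℝ) : ℝ :=
  ∑ j, pd (fun y => F y j) j x

/-- Laplacian `Δf = Σ_j ∂_j² f` of a scalar function on `ℝ³`. -/
noncomputable def lap3 (f : (Fin 3 → ℝ) → ℝ) (x : Fin 3 → ℝ) : ℝ :=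
  ∑ j, pd (pd f j) j x

/-- Curl of a vector field on `ℝ³`. -/
noncomputable def curl3 (F : (Fin 3 → ℝ) → (Fin 3 → ℝ)) (x : Fin 3 → ℝ) : Fin 3 → ℝ :=
  ![pd (fun y => F y 2) 1 x - pd (fun y => F y 1) 2 x,
    pd (fun y => F y 0) 2 x - pd (fun y => F y 2) 0 x,
    pd (fun y => F y 1) 0 x - pd (fun y => F y 0) 1 x]

/-- The evolution vector fields `Γ_φ` preserve the pre-symplectic form: for two
solutions of the Maxwell evolution system (with possibly different gauge
functions) satisfying the Gauss constraint and supported in a fixed ball, the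
pre-symplectic pairing `∫ (A₁·E₂ − A₂·E₁) dx` is constant in time. -/
lemma pd_add {u v : (Fin 3 → ℝ) → ℝ} {x : Fin 3 → ℝ} (j : Fin 3)
    (hu : DifferentiableAt ℝ u x) (hv : DifferentiableAt ℝ v x) :
    pd (fun y => u y + v y) j x = pd u j x + pd v j x := by
  simp [pd, fderiv_fun_add hu hv]

lemma pd_sub {u v : (Fin 3 → ℝ) → ℝ} {x : Fin 3 → ℝ} (j : Fin 3)
    (hu : DifferentiableAt ℝ u x) (hv : DifferentiableAt ℝ v x) :
    pd (fun y => u y - v y) j x = pd u j x - pd v j x := by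
  simp [pd, fderiv_fun_sub hu hv]

lemma pd_mul {u v : (Fin 3 → ℝ) → ℝ} {x : Fin 3 → ℝ} (j : Fin 3)
    (hu : DifferentiableAt ℝ u x) (hv : DifferentiableAt ℝ v x) :
    pd (fun y => u y * v y) j x = pd u j x * v x + u x * pd v j x := by
  simp [pd, fderiv_fun_mul hu hv]; ring

lemma pd_sum {ι : Type*} (s : Finset ι) {u : ι → (Fin 3 → ℝ) → ℝ} {x : Fin 3 → ℝ} (j : Fin 3)
    (hu : ∀ i ∈ s, DifferentiableAt ℝ (u i) x) :
    pd (fun y => ∑ i ∈ s, u i y) j x = ∑ i ∈ s, pd (u i) j x := by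
  simp [pd, fderiv_fun_sum hu]

lemma contDiff_pd {u : (Fin 3 → ℝ) → ℝ} (hu : ContDiff ℝ (⊤ : ℕ∞) u) (j : Fin 3) :
    ContDiff ℝ (⊤ : ℕ∞) (pd u j) := by
  have h1 : ContDiff ℝ (⊤ : ℕ∞) (fderiv ℝ u) := (contDiff_infty_iff_fderiv.1 hu).2
  exact h1.clm_apply contDiff_const

lemma contDiff_div3 {F : (Fin 3 → ℝ) → (Fin 3 → ℝ)} (hF : ContDiff ℝ (⊤ : ℕ∞) F) :
    ContDiff ℝ (⊤ : ℕ∞) (div3 F) :=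
  ContDiff.sum fun j _ => contDiff_pd (contDiff_pi.1 hF j) j

lemma pd_congr_nhds {u v : (Fin 3 → ℝ) → ℝ} {x : Fin 3 → ℝ} (j : Fin 3)
    (h : u =ᶠ[nhds x] v) : pd u j x = pd v j x := by
  simp [pd, Filter.EventuallyEq.fderiv_eq h]

lemma div3_eq_zero_far {W : (Fin 3 → ℝ) → (Fin 3 → ℝ)} {R : ℝ}
    (h0 : ∀ y, R ≤ ‖y‖ → W y = 0) {x : Fin 3 → ℝ} (hx : R < ‖x‖) :
    div3 W x = 0 := by
  have hop : IsOpen {y : Fin 3 → ℝ | R < ‖y‖} := isOpen_lt continuous_const continuous_norm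
  have hmem : {y : Fin 3 → ℝ | R < ‖y‖} ∈ nhds x := hop.mem_nhds hx
  have hzero : ∀ j : Fin 3, (fun y => W y j) =ᶠ[nhds x] (fun _ => 0) := by
    intro j
    filter_upwards [hmem] with y hy
    simp [h0 y (le_of_lt hy)]
  unfold div3
  refine Finset.sum_eq_zero fun j _ => ?_
  rw [pd_congr_nhds j (hzero j)]
  simp [pd]

lemma integral_div3_eq_zero (W : (Fin 3 → ℝ) → (Fin 3 → ℝ)) (hW : ContDiff ℝ (⊤ : ℕ∞) W)
    (R : ℝ) (hR : 0 < R) (h0 : ∀ y, R ≤ ‖y‖ → W y = 0) :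
    ∫ x : Fin 3 → ℝ, div3 W x = 0 := by
  have h1top : ((⊤ : ℕ∞) : WithTop ℕ∞) ≠ 0 := by simp
  set a : Fin 3 → ℝ := fun _ => -(R + 1) with ha
  set b : Fin 3 → ℝ := fun _ => R + 1 with hb
  have hle : a ≤ b := fun i => by simp only [ha, hb]; linarith
  have hWc : ∀ i, ContDiff ℝ (⊤ : ℕ∞) (fun y => W y i) := fun i => contDiff_pi.1 hW i
  have hdivcont : Continuous (fun y => ∑ i, fderiv ℝ (fun z => W z i) y (Pi.single i 1)) := by
    have : Continuous (fun y => ∑ i, pd (fun z => W z i) i y) :=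
      continuous_finset_sum _ fun i _ => (contDiff_pd (hWc i) i).continuous
    exact this
  have key := MeasureTheory.integral_divergence_of_hasFDerivAt_off_countable' (n := 2)
    a b hle (fun i y => W y i) (fun i y => fderiv ℝ (fun z => W z i) y) ∅ Set.countable_empty
    (fun i => ((hWc i).continuous).continuousOn)
    (fun y _ i => (((hWc i).differentiable h1top) y).hasFDerivAt)
    (hdivcont.continuousOn.integrableOn_compact isCompact_Icc)
  have hface : ∀ (i : Fin 3) (c : ℝ), R + 1 ≤ |c| → ∀ (y : Fin 2 → ℝ),
      W (Fin.insertNth (α := fun _ => ℝ) i c y) i = 0 := by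
    intro i c hc y
    have h2 : |c| ≤ ‖Fin.insertNth (α := fun _ => ℝ) i c y‖ := by
      have := norm_le_pi_norm (Fin.insertNth (α := fun _ => ℝ) i c y) i
      simpa [Fin.insertNth_apply_same] using this
    have h1 : R ≤ ‖Fin.insertNth (α := fun _ => ℝ) i c y‖ := by linarith
    simp [h0 _ h1]
  have hrhs : ∀ i : Fin 3,
      ((∫ y in Set.Icc (a ∘ i.succAbove) (b ∘ i.succAbove),
          W (Fin.insertNth (α := fun _ => ℝ) i (b i) y) i) -
        ∫ y in Set.Icc (a ∘ i.succAbove) (b ∘ i.succAbove),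
          W (Fin.insertNth (α := fun _ => ℝ) i (a i) y) i) = 0 := by
    intro i
    have e1 : ∀ y : Fin 2 → ℝ, W (Fin.insertNth (α := fun _ => ℝ) i (b i) y) i = 0 := fun y =>
      hface i (b i) (by have hbi : b i = R + 1 := rfl; rw [hbi, abs_of_pos (by linarith)]) y
    have e2 : ∀ y : Fin 2 → ℝ, W (Fin.insertNth (α := fun _ => ℝ) i (a i) y) i = 0 := fun y =>
      hface i (a i) (by have hai : a i = -(R + 1) := rfl; rw [hai, abs_of_neg (by linarith : -(R+1) < 0)]; linarith) y
    simp [e1, e2]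
  rw [Finset.sum_congr rfl (fun i _ => hrhs i), Finset.sum_const, smul_zero] at key
  have hout : ∀ y : Fin 3 → ℝ, y ∉ Set.Icc a b →
      (∑ i, fderiv ℝ (fun z => W z i) y (Pi.single i 1)) = 0 := by
    intro y hy
    have hnorm : R < ‖y‖ := by
      have hny : ¬ ∀ i, a i ≤ y i ∧ y i ≤ b i := by
        intro h; exact hy ⟨fun i => (h i).1, fun i => (h i).2⟩
      rcases not_forall.1 hny with ⟨i, hi⟩
      have h2 : |y i| ≤ ‖y‖ := norm_le_pi_norm y i
      rcases not_and_or.1 hi with h | h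
      · have h3 : y i < -(R + 1) := lt_of_not_ge h
        have : R + 1 < |y i| := by rw [abs_of_neg (by linarith)]; linarith
        linarith
      · have h3 : R + 1 < y i := lt_of_not_ge h
        have : R + 1 < |y i| := by rw [abs_of_pos (by linarith)]; linarith
        linarith
    exact div3_eq_zero_far h0 hnorm
  rw [MeasureTheory.setIntegral_eq_integral_of_forall_compl_eq_zero hout] at key
  exact key

lemma key_integral (a b e1 e2 : (Fin 3 → ℝ) → (Fin 3 → ℝ)) (p1 p2 : (Fin 3 → ℝ) → ℝ)
    (ha : ContDiff ℝ (⊤ : ℕ∞) a) (hb : ContDiff ℝ (⊤ : ℕ∞) b)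
    (he1 : ContDiff ℝ (⊤ : ℕ∞) e1) (he2 : ContDiff ℝ (⊤ : ℕ∞) e2)
    (hp1 : ContDiff ℝ (⊤ : ℕ∞) p1) (hp2 : ContDiff ℝ (⊤ : ℕ∞) p2)
    (hg1 : ∀ x, div3 e1 x = 0) (hg2 : ∀ x, div3 e2 x = 0)
    (R : ℝ) (hR : 0 < R)
    (hs : ∀ x, R ≤ ‖x‖ → a x = 0 ∧ e1 x = 0 ∧ b x = 0 ∧ e2 x = 0) :
    ∫ x : Fin 3 → ℝ, ∑ i, ((e1 x i + pd p1 i x) * e2 x i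
        + a x i * (lap3 (fun y => b y i) x - pd (div3 b) i x)
        - ((e2 x i + pd p2 i x) * e1 x i
        + b x i * (lap3 (fun y => a y i) x - pd (div3 a) i x))) = 0 := by
  have h1top : ((⊤ : ℕ∞) : WithTop ℕ∞) ≠ 0 := by simp
  have hD : ∀ (f : (Fin 3 → ℝ) → ℝ), ContDiff ℝ (⊤ : ℕ∞) f →
      ∀ x, DifferentiableAt ℝ f x := fun f hf x => (hf.differentiable h1top) x
  have hA : ∀ i, ContDiff ℝ (⊤ : ℕ∞) (fun y => a y i) := fun i => contDiff_pi.1 ha i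
  have hB : ∀ i, ContDiff ℝ (⊤ : ℕ∞) (fun y => b y i) := fun i => contDiff_pi.1 hb i
  have hE1 : ∀ i, ContDiff ℝ (⊤ : ℕ∞) (fun y => e1 y i) := fun i => contDiff_pi.1 he1 i
  have hE2 : ∀ i, ContDiff ℝ (⊤ : ℕ∞) (fun y => e2 y i) := fun i => contDiff_pi.1 he2 i
  have hpdA : ∀ i j, ContDiff ℝ (⊤ : ℕ∞) (pd (fun y => a y i) j) :=
    fun i j => contDiff_pd (hA i) j
  have hpdB : ∀ i j, ContDiff ℝ (⊤ : ℕ∞) (pd (fun y => b y i) j) :=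
    fun i j => contDiff_pd (hB i) j
  have hdva : ContDiff ℝ (⊤ : ℕ∞) (div3 a) := contDiff_div3 ha
  have hdvb : ContDiff ℝ (⊤ : ℕ∞) (div3 b) := contDiff_div3 hb
  set W : (Fin 3 → ℝ) → (Fin 3 → ℝ) := fun x j =>
    ((p1 x * e2 x j - p2 x * e1 x j)
      + (∑ i, (a x i * pd (fun z => b z i) j x - b x i * pd (fun z => a z i) j x)))
      + (b x j * div3 a x - a x j * div3 b x) with hWdef
  have hWsm : ContDiff ℝ (⊤ : ℕ∞) W := by
    apply contDiff_pi.2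
    intro j
    exact (((hp1.mul (hE2 j)).sub (hp2.mul (hE1 j))).add
      (ContDiff.sum fun i _ => ((hA i).mul (hpdB i j)).sub ((hB i).mul (hpdA i j)))).add
      (((hB j).mul hdva).sub ((hA j).mul hdvb))
  have hW0 : ∀ y, R ≤ ‖y‖ → W y = 0 := by
    intro y hy
    obtain ⟨h1, h2, h3, h4⟩ := hs y hy
    funext j
    simp [hWdef, h1, h2, h3, h4]
  have hWj : ∀ (x : Fin 3 → ℝ) (j : Fin 3), pd (fun y => W y j) j x
      = ((pd p1 j x * e2 x j + p1 x * pd (fun y => e2 y j) j x)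
          - (pd p2 j x * e1 x j + p2 x * pd (fun y => e1 y j) j x))
        + (∑ i, ((pd (fun y => a y i) j x * pd (fun z => b z i) j x
              + a x i * pd (pd (fun z => b z i) j) j x)
            - (pd (fun y => b y i) j x * pd (fun z => a z i) j x
              + b x i * pd (pd (fun z => a z i) j) j x)))
        + ((pd (fun y => b y j) j x * div3 a x + b x j * pd (div3 a) j x)
          - (pd (fun y => a y j) j x * div3 b x + a x j * pd (div3 b) j x)) := by
    intro x j
    have dT1 : DifferentiableAt ℝ (fun y => p1 y * e2 y j - p2 y * e1 y j) x :=
      ((hD _ hp1 x).mul (hD _ (hE2 j) x)).sub ((hD _ hp2 x).mul (hD _ (hE1 j) x))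
    have dsummand : ∀ i : Fin 3, DifferentiableAt ℝ
        (fun y => a y i * pd (fun z => b z i) j y - b y i * pd (fun z => a z i) j y) x :=
      fun i => ((hD _ (hA i) x).mul (hD _ (hpdB i j) x)).sub
        ((hD _ (hB i) x).mul (hD _ (hpdA i j) x))
    have dT2 : DifferentiableAt ℝ
        (fun y => ∑ i, (a y i * pd (fun z => b z i) j y - b y i * pd (fun z => a z i) j y)) x :=
      DifferentiableAt.fun_sum (fun i _ => dsummand i)
    have dT3 : DifferentiableAt ℝ (fun y => b y j * div3 a y - a y j * div3 b y) x :=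
      ((hD _ (hB j) x).mul (hD _ hdva x)).sub ((hD _ (hA j) x).mul (hD _ hdvb x))
    have e0 : (fun y => W y j) = fun y =>
        ((p1 y * e2 y j - p2 y * e1 y j)
          + (∑ i, (a y i * pd (fun z => b z i) j y - b y i * pd (fun z => a z i) j y)))
          + (b y j * div3 a y - a y j * div3 b y) := rfl
    rw [e0, pd_add j (dT1.fun_add dT2) dT3, pd_add j dT1 dT2,
        pd_sub j ((hD _ hp1 x).fun_mul (hD _ (hE2 j) x)) ((hD _ hp2 x).fun_mul (hD _ (hE1 j) x)),
        pd_mul j (hD _ hp1 x) (hD _ (hE2 j) x), pd_mul j (hD _ hp2 x) (hD _ (hE1 j) x),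
        pd_sum Finset.univ j (fun i _ => dsummand i),
        pd_sub j ((hD _ (hB j) x).fun_mul (hD _ hdva x)) ((hD _ (hA j) x).fun_mul (hD _ hdvb x)),
        pd_mul j (hD _ (hB j) x) (hD _ hdva x), pd_mul j (hD _ (hA j) x) (hD _ hdvb x),
        Finset.sum_congr rfl (fun i _ => by
          rw [pd_sub j ((hD _ (hA i) x).fun_mul (hD _ (hpdB i j) x))
                ((hD _ (hB i) x).fun_mul (hD _ (hpdA i j) x)),
              pd_mul j (hD _ (hA i) x) (hD _ (hpdB i j) x),
              pd_mul j (hD _ (hB i) x) (hD _ (hpdA i j) x)])]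
  have hptwise : ∀ x : Fin 3 → ℝ,
      (∑ i, ((e1 x i + pd p1 i x) * e2 x i
        + a x i * (lap3 (fun y => b y i) x - pd (div3 b) i x)
        - ((e2 x i + pd p2 i x) * e1 x i
        + b x i * (lap3 (fun y => a y i) x - pd (div3 a) i x)))) = div3 W x := by
    intro x
    have hg1' := hg1 x
    have hg2' := hg2 x
    simp only [div3, Fin.sum_univ_three] at hg1' hg2'
    show _ = ∑ j, pd (fun y => W y j) j x
    simp only [hWj x, lap3, div3, Fin.sum_univ_three]
    linear_combination p2 x * hg1' - p1 x * hg2'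
  rw [show (fun x : Fin 3 → ℝ => ∑ i, ((e1 x i + pd p1 i x) * e2 x i
        + a x i * (lap3 (fun y => b y i) x - pd (div3 b) i x)
        - ((e2 x i + pd p2 i x) * e1 x i
        + b x i * (lap3 (fun y => a y i) x - pd (div3 a) i x))))
      = fun x => div3 W x from funext hptwise]
  exact integral_div3_eq_zero W hWsm R hR hW0

theorem stmt15 (A₁ E₁ A₂ E₂ : ℝ → (Fin 3 → ℝ) → (Fin 3 → ℝ))
    (φ₁ φ₂ : ℝ → (Fin 3 → ℝ) → ℝ)
    (hA₁ : ContDiff ℝ (⊤ : ℕ∞) fun p : ℝ × (Fin 3 → ℝ) => A₁ p.1 p.2)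
    (hE₁ : ContDiff ℝ (⊤ : ℕ∞) fun p : ℝ × (Fin 3 → ℝ) => E₁ p.1 p.2)
    (hA₂ : ContDiff ℝ (⊤ : ℕ∞) fun p : ℝ × (Fin 3 → ℝ) => A₂ p.1 p.2)
    (hE₂ : ContDiff ℝ (⊤ : ℕ∞) fun p : ℝ × (Fin 3 → ℝ) => E₂ p.1 p.2)
    (hφ₁ : ContDiff ℝ (⊤ : ℕ∞) fun p : ℝ × (Fin 3 → ℝ) => φ₁ p.1 p.2)
    (hφ₂ : ContDiff ℝ (⊤ : ℕ∞) fun p : ℝ × (Fin 3 → ℝ) => φ₂ p.1 p.2)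
    (heqA₁ : ∀ (t : ℝ) (x : Fin 3 → ℝ) (i : Fin 3),
      deriv (fun s => A₁ s x i) t = E₁ t x i + pd (φ₁ t) i x)
    (heqE₁ : ∀ (t : ℝ) (x : Fin 3 → ℝ) (i : Fin 3),
      deriv (fun s => E₁ s x i) t = lap3 (fun y => A₁ t y i) x - pd (div3 (A₁ t)) i x)
    (heqA₂ : ∀ (t : ℝ) (x : Fin 3 → ℝ) (i : Fin 3),
      deriv (fun s => A₂ s x i) t = E₂ t x i + pd (φ₂ t) i x)
    (heqE₂ : ∀ (t : ℝ) (x : Fin 3 → ℝ) (i : Fin 3),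
      deriv (fun s => E₂ s x i) t = lap3 (fun y => A₂ t y i) x - pd (div3 (A₂ t)) i x)
    (hGauss₁ : ∀ (t : ℝ) (x : Fin 3 → ℝ), div3 (E₁ t) x = 0)
    (hGauss₂ : ∀ (t : ℝ) (x : Fin 3 → ℝ), div3 (E₂ t) x = 0)
    (R : ℝ) (hR : 0 < R)
    (hsupp : ∀ (t : ℝ) (x : Fin 3 → ℝ), R ≤ ‖x‖ →
      A₁ t x = 0 ∧ E₁ t x = 0 ∧ A₂ t x = 0 ∧ E₂ t x = 0) :
    ∀ t s : ℝ,
      (∫ x : Fin 3 → ℝ, ∑ i, (A₁ t x i * E₂ t x i - A₂ t x i * E₁ t x i))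
        = ∫ x : Fin 3 → ℝ, ∑ i, (A₁ s x i * E₂ s x i - A₂ s x i * E₁ s x i) := by
  have h1top : ((⊤ : ℕ∞) : WithTop ℕ∞) ≠ 0 := by simp
  set fJ : ℝ × (Fin 3 → ℝ) → ℝ := fun p =>
    ∑ i, (A₁ p.1 p.2 i * E₂ p.1 p.2 i - A₂ p.1 p.2 i * E₁ p.1 p.2 i) with hfJ
  have hfJs : ContDiff ℝ (⊤ : ℕ∞) fJ := by
    rw [hfJ]
    exact ContDiff.sum fun i _ =>
      ((contDiff_pi.1 hA₁ i).mul (contDiff_pi.1 hE₂ i)).sub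
        ((contDiff_pi.1 hA₂ i).mul (contDiff_pi.1 hE₁ i))
  have gcont : Continuous fun p : ℝ × (Fin 3 → ℝ) =>
      fderiv ℝ fJ p ((1 : ℝ), (0 : Fin 3 → ℝ)) :=
    (hfJs.continuous_fderiv h1top).clm_apply continuous_const
  have gderiv : ∀ (s : ℝ) (x : Fin 3 → ℝ),
      HasDerivAt (fun u => fJ (u, x)) (fderiv ℝ fJ (s, x) ((1 : ℝ), (0 : Fin 3 → ℝ))) s := by
    intro s x
    have h1 : HasFDerivAt fJ (fderiv ℝ fJ (s, x)) (s, x) :=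
      (hfJs.differentiable h1top (s, x)).hasFDerivAt
    have h2 : HasDerivAt (fun u : ℝ => (u, x)) ((1 : ℝ), (0 : Fin 3 → ℝ)) s :=
      (hasDerivAt_id s).prodMk (hasDerivAt_const s x)
    exact h1.comp_hasDerivAt s h2
  have hfx0 : ∀ x : Fin 3 → ℝ, R ≤ ‖x‖ → (fun u => fJ (u, x)) = fun _ => 0 := by
    intro x hx
    funext u
    obtain ⟨h1, h2, h3, h4⟩ := hsupp u x hx
    simp [hfJ, h1, h2, h3, h4]
  have gzero : ∀ (s : ℝ) (x : Fin 3 → ℝ), R ≤ ‖x‖ →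
      fderiv ℝ fJ (s, x) ((1 : ℝ), (0 : Fin 3 → ℝ)) = 0 := by
    intro s x hx
    have h := gderiv s x
    rw [hfx0 x hx] at h
    exact h.unique (hasDerivAt_const s 0)
  have hslicecont : ∀ s : ℝ, Continuous (fun x => fJ (s, x)) := fun s =>
    hfJs.continuous.comp (Continuous.prodMk_right s)
  have hcs : ∀ s : ℝ, HasCompactSupport (fun x => fJ (s, x)) := by
    intro s
    apply HasCompactSupport.intro (isCompact_closedBall (0 : Fin 3 → ℝ) R)
    intro x hx
    have hxR : R ≤ ‖x‖ := by
      have : R < ‖x‖ := by simpa [Metric.mem_closedBall, dist_zero_right] using hx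
      linarith
    exact congrFun (hfx0 x hxR) s
  have hF : ∀ t₀ : ℝ, HasDerivAt (fun t => ∫ x : Fin 3 → ℝ, fJ (t, x)) 0 t₀ := by
    intro t₀
    obtain ⟨C, hC⟩ := ((isCompact_closedBall t₀ 1).prod
      (isCompact_closedBall (0 : Fin 3 → ℝ) R)).exists_bound_of_continuousOn
      gcont.continuousOn
    have hbound_int : MeasureTheory.Integrable
        (Set.indicator (Metric.closedBall (0 : Fin 3 → ℝ) R) fun _ => C) := by
      rw [MeasureTheory.integrable_indicator_iff measurableSet_closedBall]
      exact (MeasureTheory.integrableOn_const_iff).2 (Or.inr (MeasureTheory.measure_closedBall_lt_top))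
    have hdiff := hasDerivAt_integral_of_dominated_loc_of_deriv_le (μ := MeasureTheory.volume)
      (F := fun t (x : Fin 3 → ℝ) => fJ (t, x))
      (F' := fun s (x : Fin 3 → ℝ) => fderiv ℝ fJ (s, x) ((1 : ℝ), (0 : Fin 3 → ℝ)))
      (x₀ := t₀)
      (bound := Set.indicator (Metric.closedBall (0 : Fin 3 → ℝ) R) fun _ => C)
      (Metric.ball_mem_nhds t₀ one_pos)
      (Filter.Eventually.of_forall fun s => (hslicecont s).aestronglyMeasurable)
      ((hslicecont t₀).integrable_of_hasCompactSupport (hcs t₀))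
      ((gcont.comp (Continuous.prodMk_right t₀)).aestronglyMeasurable)
      (Filter.Eventually.of_forall fun x => by
        intro s hs
        by_cases hx : x ∈ Metric.closedBall (0 : Fin 3 → ℝ) R
        · rw [Set.indicator_of_mem hx]
          exact hC (s, x) ⟨Metric.ball_subset_closedBall hs, hx⟩
        · rw [Set.indicator_of_notMem hx]
          have hxR : R ≤ ‖x‖ := by
            have : R < ‖x‖ := by simpa [Metric.mem_closedBall, dist_zero_right] using hx
            linarith
          rw [gzero s x hxR]
          simp)
      hbound_int
      (Filter.Eventually.of_forall fun x s _ => gderiv s x)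
    have hgval : ∀ x : Fin 3 → ℝ, fderiv ℝ fJ (t₀, x) ((1 : ℝ), (0 : Fin 3 → ℝ))
        = ∑ i, ((E₁ t₀ x i + pd (φ₁ t₀) i x) * E₂ t₀ x i
          + A₁ t₀ x i * (lap3 (fun y => A₂ t₀ y i) x - pd (div3 (A₂ t₀)) i x)
          - ((E₂ t₀ x i + pd (φ₂ t₀) i x) * E₁ t₀ x i
          + A₂ t₀ x i * (lap3 (fun y => A₁ t₀ y i) x - pd (div3 (A₁ t₀)) i x))) := by
      intro x
      have dA1 : ∀ i : Fin 3,
          HasDerivAt (fun s => A₁ s x i) (E₁ t₀ x i + pd (φ₁ t₀) i x) t₀ := by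
        intro i
        have hd : DifferentiableAt ℝ (fun s => A₁ s x i) t₀ :=
          (((contDiff_pi.1 hA₁ i).comp (contDiff_id.prodMk contDiff_const)).differentiable h1top) t₀
        have h := hd.hasDerivAt
        rwa [heqA₁ t₀ x i] at h
      have dA2 : ∀ i : Fin 3,
          HasDerivAt (fun s => A₂ s x i) (E₂ t₀ x i + pd (φ₂ t₀) i x) t₀ := by
        intro i
        have hd : DifferentiableAt ℝ (fun s => A₂ s x i) t₀ :=
          (((contDiff_pi.1 hA₂ i).comp (contDiff_id.prodMk contDiff_const)).differentiable h1top) t₀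
        have h := hd.hasDerivAt
        rwa [heqA₂ t₀ x i] at h
      have dE1 : ∀ i : Fin 3, HasDerivAt (fun s => E₁ s x i)
          (lap3 (fun y => A₁ t₀ y i) x - pd (div3 (A₁ t₀)) i x) t₀ := by
        intro i
        have hd : DifferentiableAt ℝ (fun s => E₁ s x i) t₀ :=
          (((contDiff_pi.1 hE₁ i).comp (contDiff_id.prodMk contDiff_const)).differentiable h1top) t₀
        have h := hd.hasDerivAt
        rwa [heqE₁ t₀ x i] at h
      have dE2 : ∀ i : Fin 3, HasDerivAt (fun s => E₂ s x i)
          (lap3 (fun y => A₂ t₀ y i) x - pd (div3 (A₂ t₀)) i x) t₀ := by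
        intro i
        have hd : DifferentiableAt ℝ (fun s => E₂ s x i) t₀ :=
          (((contDiff_pi.1 hE₂ i).comp (contDiff_id.prodMk contDiff_const)).differentiable h1top) t₀
        have h := hd.hasDerivAt
        rwa [heqE₂ t₀ x i] at h
      have hsum : HasDerivAt (fun s => fJ (s, x))
          (∑ i, ((E₁ t₀ x i + pd (φ₁ t₀) i x) * E₂ t₀ x i
            + A₁ t₀ x i * (lap3 (fun y => A₂ t₀ y i) x - pd (div3 (A₂ t₀)) i x)
            - ((E₂ t₀ x i + pd (φ₂ t₀) i x) * E₁ t₀ x i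
            + A₂ t₀ x i * (lap3 (fun y => A₁ t₀ y i) x - pd (div3 (A₁ t₀)) i x)))) t₀ :=
        HasDerivAt.fun_sum fun i _ => ((dA1 i).fun_mul (dE2 i)).fun_sub ((dA2 i).fun_mul (dE1 i))
      exact (gderiv t₀ x).unique hsum
    have hint0 : (∫ x : Fin 3 → ℝ, fderiv ℝ fJ (t₀, x) ((1 : ℝ), (0 : Fin 3 → ℝ))) = 0 := by
      rw [show (fun x : Fin 3 → ℝ => fderiv ℝ fJ (t₀, x) ((1 : ℝ), (0 : Fin 3 → ℝ)))
          = fun x => ∑ i, ((E₁ t₀ x i + pd (φ₁ t₀) i x) * E₂ t₀ x i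
            + A₁ t₀ x i * (lap3 (fun y => A₂ t₀ y i) x - pd (div3 (A₂ t₀)) i x)
            - ((E₂ t₀ x i + pd (φ₂ t₀) i x) * E₁ t₀ x i
            + A₂ t₀ x i * (lap3 (fun y => A₁ t₀ y i) x - pd (div3 (A₁ t₀)) i x)))
          from funext hgval]
      exact key_integral (A₁ t₀) (A₂ t₀) (E₁ t₀) (E₂ t₀) (φ₁ t₀) (φ₂ t₀)
        (hA₁.comp (contDiff_const.prodMk contDiff_id))
        (hA₂.comp (contDiff_const.prodMk contDiff_id))
        (hE₁.comp (contDiff_const.prodMk contDiff_id))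
        (hE₂.comp (contDiff_const.prodMk contDiff_id))
        (hφ₁.comp (contDiff_const.prodMk contDiff_id))
        (hφ₂.comp (contDiff_const.prodMk contDiff_id))
        (hGauss₁ t₀) (hGauss₂ t₀) R hR (fun x hx => hsupp t₀ x hx)
    have := hdiff.2
    rwa [hint0] at this
  intro t s
  exact is_const_of_deriv_eq_zero (fun u => (hF u).differentiableAt) (fun u => (hF u).deriv) t s
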